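/- arXiv:1403.5998 — 2 statements merged into one kernel-verified Lean document; each statement's English description precedes it below -/
import Mathlib

section
/- Q_p(ξ) = Q_p(ζ_p), where ξ^(p-1) = -p and ζ_p is a primitive p-th root of unity; that is, the field obtained by adjoining a root of X^(p-1)+p to Q_p equals the p-th cyclotomic extension of Q_p. -/
open Polynomial

namespace Stmt2Aux

variable (p : ℕ) [Fact p.Prime]


variable (p : ℕ) [Fact p.Prime]

lemma p_not_mem_sq : (p : ℤ_[p]) ∉ Ideal.span {(p:ℤ_[p])} ^ 2 := by
  rw [Ideal.span_singleton_pow, Ideal.mem_span_singleton]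
  rintro ⟨c, hc⟩
  have hn : ‖(p:ℤ_[p])‖ = ‖(p:ℤ_[p])^2 * c‖ := by rw [← hc]
  have h2 : ‖(p:ℤ_[p])^2 * c‖ ≤ ‖(p:ℤ_[p])‖^2 := by
    rw [norm_mul, norm_pow]
    calc ‖(p:ℤ_[p])‖^2 * ‖c‖ ≤ ‖(p:ℤ_[p])‖^2 * 1 := by
          gcongr; exact c.norm_le_one
      _ = ‖(p:ℤ_[p])‖^2 := mul_one _
  rw [PadicInt.norm_p] at hn h2
  have hp1 : (1:ℝ) < p := by exact_mod_cast (Fact.out : p.Prime).one_lt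
  have hpos : (0:ℝ) < (p:ℝ)⁻¹ := by positivity
  have hlt : (p:ℝ)⁻¹ < 1 := inv_lt_one_of_one_lt₀ hp1
  nlinarith [mul_lt_mul_of_pos_right hlt hpos, hn.le.trans h2]

lemma span_p_prime : (Ideal.span {(p:ℤ_[p])}).IsPrime := by
  rw [← PadicInt.maximalIdeal_eq_span_p]
  exact (IsLocalRing.maximalIdeal.isMaximal _).isPrime

lemma irred_of_eisenstein (F : ℤ_[p][X]) (hm : F.Monic) (hd : 0 < F.natDegree)
    (hc : ∀ i, i < F.natDegree → F.coeff i ∈ Ideal.span {(p:ℤ_[p])})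
    (h0 : F.coeff 0 ∉ Ideal.span {(p:ℤ_[p])} ^ 2) : Irreducible F := by
  have hprime := span_p_prime p
  have hE : F.IsEisensteinAt (Ideal.span {(p:ℤ_[p])}) :=
    { leading := by
        rw [hm.leadingCoeff]
        exact fun h => hprime.ne_top (Ideal.eq_top_of_isUnit_mem _ h isUnit_one)
      mem := fun hi => hc _ hi
      notMem := h0 }
  exact hE.irreducible hprime hm.isPrimitive hd

lemma irred_F : Irreducible ((X : ℤ_[p][X]) ^ (p - 1) + C (p : ℤ_[p])) := by
  have hp2 : 2 ≤ p := (Fact.out : p.Prime).two_le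
  have hne : p - 1 ≠ 0 := by omega
  have hm : ((X : ℤ_[p][X]) ^ (p - 1) + C (p : ℤ_[p])).Monic := monic_X_pow_add_C _ hne
  refine irred_of_eisenstein p _ hm ?_ ?_ ?_
  · rw [natDegree_X_pow_add_C]; omega
  · intro i hi
    rw [natDegree_X_pow_add_C] at hi
    rw [coeff_add, coeff_X_pow, if_neg (by omega), coeff_C, zero_add]
    split
    · exact Ideal.mem_span_singleton.2 dvd_rfl
    · exact Ideal.zero_mem _
  · rw [coeff_add, coeff_X_pow, if_neg (by omega), coeff_C, if_pos rfl, zero_add]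
    exact p_not_mem_sq p

lemma comp_X_add_one_comp_X_sub_one (q : ℤ_[p][X]) :
    (q.comp (X + 1)).comp (X - C 1) = q := by
  rw [comp_assoc]
  simp

lemma irred_Phi : Irreducible (cyclotomic p ℤ_[p]) := by
  have hp2 : 2 ≤ p := (Fact.out : p.Prime).two_le
  have hX1 : (X + 1 : ℤ_[p][X]) = X + C 1 := by rw [map_one]
  set G : ℤ_[p][X] := (cyclotomic p ℤ_[p]).comp (X + 1) with hG
  have hGmap : G = map ((Int.castRingHom ℤ_[p])) ((cyclotomic p ℤ).comp (X + 1)) := by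
    rw [Polynomial.map_comp, map_cyclotomic]
    simp [hG]
  have hmonic : G.Monic := by
    apply (cyclotomic.monic p ℤ_[p]).comp (by rw [hX1]; exact monic_X_add_C 1)
    rw [hX1, natDegree_X_add_C]; omega
  have hdeg : G.natDegree = p - 1 := by
    rw [hG, natDegree_comp, hX1, natDegree_X_add_C,
      natDegree_cyclotomic, Nat.totient_prime (Fact.out : p.Prime), mul_one]
  have hEisZ := cyclotomic_comp_X_add_one_isEisensteinAt p
  have hGdegZ : ((cyclotomic p ℤ).comp (X + 1)).natDegree = p - 1 := by
    rw [natDegree_comp, show (X + 1 : ℤ[X]) = X + C 1 by rw [map_one], natDegree_X_add_C,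
      natDegree_cyclotomic, Nat.totient_prime (Fact.out : p.Prime), mul_one]
  have hGirr : Irreducible G := by
    refine irred_of_eisenstein p _ hmonic (by omega) ?_ ?_
    · intro i hi
      rw [hGmap, coeff_map]
      have hmem := hEisZ.mem (n := i) (by rw [hGdegZ, hdeg] at *; omega)
      rw [show (Submodule.span ℤ {((p:ℕ):ℤ)}) = Ideal.span {((p:ℕ):ℤ)} from rfl,
        Ideal.mem_span_singleton] at hmem
      obtain ⟨c, hc⟩ := hmem
      rw [Ideal.mem_span_singleton, hc]
      exact ⟨(c : ℤ_[p]), by simp⟩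
    · have hcoeff0 : G.coeff 0 = (p : ℤ_[p]) := by
        rw [hGmap, coeff_map, coeff_zero_eq_eval_zero, eval_comp]
        simp [eval_one_cyclotomic_prime]
      rw [hcoeff0]
      exact p_not_mem_sq p
  constructor
  · intro hu
    obtain ⟨r, hru, hr⟩ := Polynomial.isUnit_iff.1 hu
    have : IsUnit G := by
      rw [hG, ← hr, C_comp]
      exact Polynomial.isUnit_C.2 hru
    exact hGirr.not_isUnit this
  · intro a b hab
    have hGab : G = (a.comp (X + 1)) * (b.comp (X + 1)) := by rw [hG, hab, mul_comp]
    rcases hGirr.isUnit_or_isUnit hGab with h | h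
    · left
      obtain ⟨r, hru, hr⟩ := Polynomial.isUnit_iff.1 h
      have ha : a = C r := by
        conv_lhs => rw [← comp_X_add_one_comp_X_sub_one p a, ← hr, C_comp]
      rw [ha]
      exact Polynomial.isUnit_C.2 hru
    · right
      obtain ⟨r, hru, hr⟩ := Polynomial.isUnit_iff.1 h
      have hb : b = C r := by
        conv_lhs => rw [← comp_X_add_one_comp_X_sub_one p b, ← hr, C_comp]
      rw [hb]
      exact Polynomial.isUnit_C.2 hru




local notation "O" => AdjoinRoot (cyclotomic p ℤ_[p])

noncomputable def eO : O ≃ₗ[ℤ_[p]] (Fin (cyclotomic p ℤ_[p]).natDegree → ℤ_[p]) :=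
  (AdjoinRoot.powerBasis' (cyclotomic.monic p ℤ_[p])).basis.equivFun

lemma pO_pow_eq_smul (n : ℕ) (y : O) : ((p:O))^n * y = ((p:ℤ_[p])^n) • y := by
  have h : ((p:O)) = algebraMap ℤ_[p] O (p:ℤ_[p]) := by rw [map_natCast]
  rw [h, ← map_pow, ← Algebra.smul_def]

lemma mem_span_p_pow_iff (n : ℕ) (x : O) :
    x ∈ Ideal.span {((p:O))^n} ↔ ∀ i, eO p x i ∈ Ideal.span {((p:ℤ_[p]))^n} := by
  constructor
  · intro hx
    obtain ⟨y, hy⟩ := Ideal.mem_span_singleton.1 hx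
    intro i
    rw [hy, pO_pow_eq_smul, map_smul]
    exact Ideal.mem_span_singleton.2 ⟨(eO p) y i, by simp [mul_comm]⟩
  · intro h
    choose c hc using fun i => Ideal.mem_span_singleton.1 (h i)
    refine Ideal.mem_span_singleton.2 ⟨(eO p).symm c, ?_⟩
    apply (eO p).injective
    rw [pO_pow_eq_smul, map_smul]
    funext i
    simp only [Pi.smul_apply, LinearEquiv.apply_symm_apply, smul_eq_mul]
    exact hc i
  
lemma zp_adic_complete : IsAdicComplete (Ideal.span {(p:ℤ_[p])}) ℤ_[p] := by
  rw [← PadicInt.maximalIdeal_eq_span_p]; infer_instance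

lemma O_adic_complete : IsAdicComplete (Ideal.span {(p:O)}) O := by
  refine { toIsHausdorff := ⟨?_⟩, toIsPrecomplete := ⟨?_⟩ }
  · intro x hx
    simp only [← Ideal.one_eq_top, smul_eq_mul, mul_one, SModEq.sub_mem, sub_zero,
      Ideal.span_singleton_pow, mem_span_p_pow_iff] at hx
    have hz : ∀ i, eO p x i = 0 := by
      intro i
      refine (zp_adic_complete p).toIsHausdorff.haus (eO p x i) (fun n => ?_)
      simp only [← Ideal.one_eq_top, smul_eq_mul, mul_one, SModEq.sub_mem, sub_zero,
        Ideal.span_singleton_pow]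
      exact hx n i
    have : eO p x = 0 := funext hz
    simpa using congrArg (eO p).symm this
  · intro f hf
    simp only [← Ideal.one_eq_top, smul_eq_mul, mul_one, SModEq.sub_mem,
      Ideal.span_singleton_pow, mem_span_p_pow_iff] at hf
    have hfi : ∀ i, ∃ L : ℤ_[p], ∀ n, (fun n => eO p (f n) i) n ≡ L
        [SMOD ((Ideal.span {(p:ℤ_[p])}) ^ n • ⊤ : Ideal ℤ_[p])] := by
      intro i
      refine (zp_adic_complete p).toIsPrecomplete.prec ?_
      intro m n hmn
      simp only [← Ideal.one_eq_top, smul_eq_mul, mul_one, SModEq.sub_mem,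
        Ideal.span_singleton_pow]
      have := hf hmn
      rw [show eO p (f m) i - eO p (f n) i = eO p (f m - f n) i by rw [map_sub]; rfl]
      exact this i
    choose L hL using hfi
    refine ⟨(eO p).symm L, fun n => ?_⟩
    simp only [← Ideal.one_eq_top, smul_eq_mul, mul_one, SModEq.sub_mem,
      Ideal.span_singleton_pow, mem_span_p_pow_iff]
    intro i
    have := hL i n
    simp only [← Ideal.one_eq_top, smul_eq_mul, mul_one, SModEq.sub_mem,
      Ideal.span_singleton_pow] at this
    rw [map_sub]
    simpa using this





lemma span_Phi_prime : (Ideal.span {cyclotomic p ℤ_[p]}).IsPrime :=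
  (Ideal.span_singleton_prime (cyclotomic.monic p ℤ_[p]).ne_zero).2
    ((UniqueFactorizationMonoid.irreducible_iff_prime).1 (irred_Phi p))

lemma O_domain : IsDomain O := by
  haveI := span_Phi_prime p
  exact Ideal.Quotient.isDomain (Ideal.span {cyclotomic p ℤ_[p]})

lemma O_nontrivial : Nontrivial O :=
  Ideal.Quotient.nontrivial_iff.mpr (span_Phi_prime p).ne_top

lemma p_ne_zero_O : ((p:ℕ) : O) ≠ 0 := by
  haveI := O_nontrivial p
  intro h
  have h1 : ((p:ℤ_[p]) • (1:O)) = 0 := by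
    rw [Algebra.smul_def, mul_one, map_natCast]
    exact_mod_cast h
  have h2 : (p:ℤ_[p]) • eO p 1 = 0 := by rw [← map_smul, h1, map_zero]
  have h3 : eO p 1 ≠ 0 := fun hc => one_ne_zero ((eO p).map_eq_zero_iff.1 hc)
  obtain ⟨i, hi⟩ := Function.ne_iff.1 h3
  apply hi
  have := congrFun h2 i
  simp only [Pi.smul_apply, smul_eq_mul, Pi.zero_apply] at this ⊢
  rcases mul_eq_zero.1 this with h | h
  · exact absurd h (by exact_mod_cast (Nat.cast_ne_zero (R := ℤ_[p])).2 (Fact.out : p.Prime).ne_zero)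
  · exact h

set_option maxHeartbeats 1600000 in
set_option synthInstance.maxHeartbeats 400000 in
lemma exists_xi : ∃ ξ₀ : O, ξ₀ ^ (p-1) + (p:O) = 0 := by
  haveI := O_domain p
  haveI := O_nontrivial p
  have hp2 : 2 ≤ p := (Fact.out : p.Prime).two_le
  haveI : NeZero ((p:ℕ) : O) := ⟨p_ne_zero_O p⟩
  set ζ : O := AdjoinRoot.root (cyclotomic p ℤ_[p]) with hζdef
  have hζ : IsPrimitiveRoot ζ p := by
    rw [← isRoot_cyclotomic_iff (n := p) (R := O)]
    rw [IsRoot, ← map_cyclotomic p (algebraMap ℤ_[p] O), eval_map, AdjoinRoot.algebraMap_eq]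
    exact AdjoinRoot.eval₂_root _
  have hζ1 : ζ ≠ 1 := hζ.ne_one (by omega)
  set π : O := 1 - ζ with hπdef
  have hπ0 : π ≠ 0 := sub_ne_zero.2 fun h => hζ1 h.symm
  -- product formula
  have hprod : (p : O) = ∏ μ ∈ primitiveRoots p O, (1 - μ) := by
    have h1 : eval 1 (cyclotomic p O) = (p : O) := eval_one_cyclotomic_prime
    rw [cyclotomic_eq_prod_X_sub_primitiveRoots hζ, eval_prod] at h1
    rw [← h1]
    refine Finset.prod_congr rfl fun μ _ => ?_
    simp
  have hinjOn : ∀ x ∈ Finset.Ico 1 p, ∀ y ∈ Finset.Ico 1 p,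
      (fun i => ζ ^ i) x = (fun i => ζ ^ i) y → x = y := by
    intro x hx y hy hxy
    rw [Finset.mem_Ico] at hx hy
    exact hζ.pow_inj hx.2 hy.2 hxy
  have himg : (Finset.Ico 1 p).image (fun i => ζ ^ i) = primitiveRoots p O := by
    apply Finset.eq_of_subset_of_card_le
    · intro μ hμ
      obtain ⟨i, hi, rfl⟩ := Finset.mem_image.1 hμ
      rw [Finset.mem_Ico] at hi
      refine (mem_primitiveRoots (by omega)).2 (hζ.pow_of_coprime i ?_)
      exact Nat.Coprime.symm (((Fact.out : p.Prime).coprime_iff_not_dvd).2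
        (Nat.not_dvd_of_pos_of_lt (by omega) hi.2))
    · rw [hζ.card_primitiveRoots, Nat.totient_prime (Fact.out : p.Prime),
        Finset.card_image_of_injOn hinjOn, Nat.card_Ico]
  have hprod2 : (p:O) = ∏ i ∈ Finset.Ico 1 p, (1 - ζ ^ i) := by
    rw [hprod, ← himg, Finset.prod_image hinjOn]
  -- factor out π
  set s : ℕ → O := fun i => ∑ j ∈ Finset.range i, ζ ^ j with hsdef
  have hfac : ∀ i, 1 - ζ ^ i = π * s i := by
    intro i
    have h := geom_sum_mul ζ i
    rw [hπdef, hsdef]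
    linear_combination h
  set u : O := ∏ i ∈ Finset.Ico 1 p, s i with hudef
  have hpu : (p:O) = π ^ (p-1) * u := by
    rw [hprod2, Finset.prod_congr rfl (fun i _ => hfac i), Finset.prod_mul_distrib,
      Finset.prod_const, Nat.card_Ico, hudef]
  -- each s i is invertible
  have hζp1 : ζ ^ p = 1 := hζ.pow_eq_one
  have hsunit : ∀ i : ℕ, ∃ t, i ∈ Finset.Ico 1 p → s i * t = 1 := by
    intro i
    by_cases hi : i ∈ Finset.Ico 1 p
    swap
    · exact ⟨0, fun h => absurd h hi⟩
    rw [Finset.mem_Ico] at hi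
    have hcop : Nat.Coprime p i := ((Fact.out : p.Prime).coprime_iff_not_dvd).2
        (Nat.not_dvd_of_pos_of_lt (by omega) hi.2)
    obtain ⟨j, -, hj⟩ := Nat.exists_mul_mod_eq_one_of_coprime hcop.symm (by omega)
    refine ⟨∑ k ∈ Finset.range j, (ζ ^ i) ^ k, fun _ => ?_⟩
    have hgs := geom_sum_mul (ζ ^ i) j
    have hζij : (ζ ^ i) ^ j = ζ := by
      rw [← pow_mul, ← Nat.div_add_mod (i * j) p, pow_add, pow_mul, hζp1, one_pow, one_mul, hj,
        pow_one]
    apply mul_left_cancel₀ hπ0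
    rw [mul_one]
    calc π * (s i * (∑ k ∈ Finset.range j, (ζ ^ i) ^ k))
        = (1 - ζ ^ i) * (∑ k ∈ Finset.range j, (ζ ^ i) ^ k) := by rw [hfac i]; ring
      _ = -((∑ k ∈ Finset.range j, (ζ ^ i) ^ k) * (ζ ^ i - 1)) := by ring
      _ = -((ζ ^ i) ^ j - 1) := by rw [hgs]
      _ = π := by rw [hζij, hπdef]; ring
  choose t ht using hsunit
  set T : O := ∏ i ∈ Finset.Ico 1 p, t i with hTdef
  have huT : u * T = 1 := by
    rw [hudef, hTdef, ← Finset.prod_mul_distrib]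
    rw [Finset.prod_congr rfl (fun i hi => ht i hi)]
    exact Finset.prod_const_one
  have hπp1T : π ^ (p-1) = (p:O) * T := by
    calc π ^ (p-1) = π ^ (p-1) * (u * T) := by rw [huT, mul_one]
      _ = ((p:O)) * T := by rw [← mul_assoc, ← hpu]
  have hπdvdp : π ∣ (p:O) := by
    refine ⟨π ^ (p-2) * u, ?_⟩
    have h1 : p - 1 = (p - 2) + 1 := by omega
    rw [hpu, h1, pow_succ]
    ring
  -- Wilson: π ∣ u + 1
  have hπdvd_sub : ∀ i : ℕ, π ∣ s i - (i : O) := by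
    intro i
    have hi : ((i:ℕ) : O) = ∑ _j ∈ Finset.range i, (1:O) := by simp
    rw [hsdef, hi, ← Finset.sum_sub_distrib]
    refine Finset.dvd_sum fun j _ => ?_
    refine ⟨-(∑ k ∈ Finset.range j, ζ ^ k), ?_⟩
    have h := geom_sum_mul ζ j
    rw [hπdef]
    linear_combination -h
  have hfact : (((p-1).factorial : ℕ) : O) = ∏ i ∈ Finset.Ico 1 p, ((i:ℕ) : O) := by
    rw [← Nat.cast_prod]
    congr 1
    have h : ∏ i ∈ Finset.Ico 1 p, i = (p-1).factorial := by
      conv_lhs => rw [show p = (p-1)+1 by omega]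
      exact Finset.prod_Ico_id_eq_factorial (p-1)
    rw [h]
  have hπdvd_u : π ∣ u - (((p-1).factorial : ℕ) : O) := by
    rw [← Ideal.mem_span_singleton, ← Ideal.Quotient.eq]
    rw [hudef, hfact, map_prod, map_prod]
    refine Finset.prod_congr rfl fun i _ => ?_
    rw [Ideal.Quotient.eq, Ideal.mem_span_singleton]
    exact hπdvd_sub i
  have hwilson : (p:ℕ) ∣ (p-1).factorial + 1 := by
    have h : ((((p-1).factorial + 1 : ℕ)) : ZMod p) = 0 := by
      push_cast [ZMod.wilsons_lemma]
      ring
    exact (ZMod.natCast_eq_zero_iff _ _).1 h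
  have hπdvd_fac : π ∣ (((p-1).factorial : ℕ) : O) + 1 := by
    obtain ⟨m, hm⟩ := hwilson
    have h : (((p-1).factorial : ℕ) : O) + 1 = ((p:ℕ) : O) * ((m:ℕ) : O) := by
      rw [← Nat.cast_mul, ← hm]
      push_cast
      ring
    rw [h]
    exact hπdvdp.mul_right _
  have hπdvd_u1 : π ∣ u + 1 := by
    have h : u + 1 = (u - (((p-1).factorial : ℕ) : O)) + ((((p-1).factorial : ℕ) : O) + 1) := by
      ring
    rw [h]
    exact dvd_add hπdvd_u hπdvd_fac
  -- quotient mod p, Hensel setup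
  have hχ0 : eval₂ PadicInt.toZMod (1 : ZMod p) (cyclotomic p ℤ_[p]) = 0 := by
    rw [eval₂_eq_eval_map, map_cyclotomic, eval_one_cyclotomic_prime, ZMod.natCast_self]
  set χ : O →+* ZMod p := AdjoinRoot.lift PadicInt.toZMod 1 hχ0 with hχdef
  have hpnonunit : (p:O) ∈ nonunits O := by
    intro hun
    have h := hun.map χ
    rw [map_natCast, ZMod.natCast_self] at h
    exact not_isUnit_zero h
  haveI hchar : CharP (O ⧸ Ideal.span {(p:O)}) p := CharP.quotient O p hpnonunit
  set mkq : O →+* O ⧸ Ideal.span {(p:O)} := Ideal.Quotient.mk (Ideal.span {(p:O)}) with hmkq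
  have hmkp : mkq (p:O) = 0 :=
    Ideal.Quotient.eq_zero_iff_mem.2 (Ideal.subset_span (Set.mem_singleton _))
  have hmkπ1 : (mkq π)^(p-1) = 0 := by
    rw [← map_pow, hπp1T, map_mul, hmkp, zero_mul]
  have hmkπp : (mkq π)^p = 0 := by
    have hE : p - 1 + 1 = p := by omega
    calc (mkq π)^p = (mkq π)^(p-1+1) := by rw [hE]
      _ = (mkq π)^(p-1) * mkq π := pow_succ _ _
      _ = 0 := by rw [hmkπ1, zero_mul]
  set v : O := -u with hvdef
  obtain ⟨w0, hw0⟩ := hπdvd_u1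
  have hvw : v = 1 + π * (-w0) := by rw [hvdef]; linear_combination -hw0
  have hmkvp : (mkq v)^p = 1 := by
    rw [hvw, map_add, map_one, map_mul, map_neg, add_pow_char, one_pow, mul_pow, hmkπp, zero_mul]
    ring
  have hexp2 : (p-1)*(p-1) = p*(p-2)+1 := by
    obtain ⟨q, rfl⟩ : ∃ q, p = q + 2 := ⟨p - 2, by omega⟩
    have e1 : q + 2 - 1 = q + 1 := by omega
    have e2 : q + 2 - 2 = q := by omega
    rw [e1, e2]
    ring
  have hbb : mkq ((v^(p-1))^(p-1)) = mkq v := by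
    rw [map_pow, map_pow, ← pow_mul, hexp2, pow_add, pow_mul, hmkvp, one_pow, pow_one, one_mul]
  have hvunit : IsUnit (mkq v) := by
    refine IsUnit.of_mul_eq_one ((mkq v)^(p-1)) ?_
    have hE : p - 1 + 1 = p := by omega
    rw [← pow_succ', hE]
    exact hmkvp
  set F : O[X] := X^(p-1) + C u with hFdef
  have hFmonic : F.Monic := monic_X_pow_add_C _ (by omega)
  have hFb : F.eval (v^(p-1)) ∈ Ideal.span {(p:O)} := by
    rw [← Ideal.Quotient.eq_zero_iff_mem]
    have : F.eval (v^(p-1)) = (v^(p-1))^(p-1) + u := by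
      rw [hFdef, eval_add, eval_pow, eval_X, eval_C]
    rw [this, map_add, hbb, hvdef, map_neg]
    ring
  have hFderiv_unit : IsUnit (mkq (F.derivative.eval (v^(p-1)))) := by
    have hd : derivative F = C (((p-1 : ℕ)) : O) * X^(p-2) := by
      rw [hFdef, derivative_add, derivative_C, add_zero, derivative_X_pow,
        show p-1-1 = p-2 by omega]
    rw [hd, eval_mul, eval_C, eval_pow, eval_X, map_mul, map_pow, map_pow]
    refine IsUnit.mul ?_ ((hvunit.pow (p-1)).pow (p-2))
    have h1 : (mkq (((p-1:ℕ)) : O)) = -1 := by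
      rw [map_natCast, Nat.cast_sub (by omega : 1 ≤ p), Nat.cast_one, CharP.cast_eq_zero (O ⧸ Ideal.span {((p:ℕ):O)}) p, zero_sub]
    rw [h1]
    exact isUnit_one.neg
  haveI := O_adic_complete p
  haveI : HenselianRing O (Ideal.span {(p:O)}) := inferInstance
  obtain ⟨a, ha, -⟩ :=
    HenselianRing.is_henselian (I := Ideal.span {(p:O)}) F hFmonic (v^(p-1)) hFb hFderiv_unit
  refine ⟨π * a, ?_⟩
  have haroot : a^(p-1) + u = 0 := by
    have h := ha
    rw [IsRoot, hFdef, eval_add, eval_pow, eval_X, eval_C] at h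
    exact h
  rw [mul_pow]
  linear_combination (π^(p-1)) * haroot + hpu


end Stmt2Aux

open Stmt2Aux


set_option maxHeartbeats 1000000 in
set_option synthInstance.maxHeartbeats 400000 in
/-- `ℚ_p(ξ) = ℚ_p(ζ_p)` for `p` odd: the field obtained by adjoining
a root of `X^(p-1) + p` to `ℚ_p` is isomorphic, as a `ℚ_p`-algebra, to the `p`-th
cyclotomic extension of `ℚ_p` (obtained by adjoining a root of the `p`-th
cyclotomic polynomial). -/
theorem stmt_2 (p : ℕ) [Fact p.Prime] (hp : Odd p) :
    Nonempty
      (AdjoinRoot ((X : Polynomial ℚ_[p]) ^ (p - 1) + C (p : ℚ_[p])) ≃ₐ[ℚ_[p]]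
        AdjoinRoot (Polynomial.cyclotomic p ℚ_[p])) := by
  have hp2 : 2 ≤ p := (Fact.out : p.Prime).two_le
  set fQ : Polynomial ℚ_[p] := (X : Polynomial ℚ_[p]) ^ (p - 1) + C (p : ℚ_[p]) with hfQ
  have hmapF : ((X : Polynomial ℤ_[p]) ^ (p - 1) + C (p : ℤ_[p])).map (algebraMap ℤ_[p] ℚ_[p])
      = fQ := by
    rw [Polynomial.map_add, Polynomial.map_pow, map_X, map_C, map_natCast]
  have hirrfQ : Irreducible fQ := by
    rw [← hmapF]
    exact ((monic_X_pow_add_C (p : ℤ_[p]) (show p - 1 ≠ 0 by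
      omega)).irreducible_iff_irreducible_map_fraction_map).1 (irred_F p)
  have hmapPhi : (cyclotomic p ℤ_[p]).map (algebraMap ℤ_[p] ℚ_[p]) = cyclotomic p ℚ_[p] :=
    map_cyclotomic _ _
  have hirrPhiQ : Irreducible (cyclotomic p ℚ_[p]) := by
    rw [← hmapPhi]
    exact ((cyclotomic.monic p ℤ_[p]).irreducible_iff_irreducible_map_fraction_map).1
      (irred_Phi p)
  haveI : Fact (Irreducible fQ) := ⟨hirrfQ⟩
  haveI : Fact (Irreducible (cyclotomic p ℚ_[p])) := ⟨hirrPhiQ⟩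
  -- the root ξ in the cyclotomic extension
  obtain ⟨ξ₀, hξ₀⟩ := exists_xi p
  have hρ0 : eval₂ ((algebraMap ℚ_[p] (AdjoinRoot (cyclotomic p ℚ_[p]))).comp
      (algebraMap ℤ_[p] ℚ_[p])) (AdjoinRoot.root (cyclotomic p ℚ_[p]))
      (cyclotomic p ℤ_[p]) = 0 := by
    rw [← eval₂_map, hmapPhi, AdjoinRoot.algebraMap_eq]
    exact AdjoinRoot.eval₂_root _
  set ρ : AdjoinRoot (cyclotomic p ℤ_[p]) →+* AdjoinRoot (cyclotomic p ℚ_[p]) :=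
    AdjoinRoot.lift ((algebraMap ℚ_[p] (AdjoinRoot (cyclotomic p ℚ_[p]))).comp
      (algebraMap ℤ_[p] ℚ_[p])) (AdjoinRoot.root (cyclotomic p ℚ_[p])) hρ0 with hρdef
  set ξ : AdjoinRoot (cyclotomic p ℚ_[p]) := ρ ξ₀ with hξdef
  have hξ : ξ ^ (p-1) + ((p:ℕ) : AdjoinRoot (cyclotomic p ℚ_[p])) = 0 := by
    rw [hξdef, ← map_pow, ← map_natCast ρ, ← map_add, hξ₀, map_zero]
  have haev : aeval ξ fQ = 0 := by
    rw [hfQ, map_add, map_pow, aeval_X, aeval_C]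
    rw [show (algebraMap ℚ_[p] (AdjoinRoot (cyclotomic p ℚ_[p]))) ((p:ℕ) : ℚ_[p])
      = ((p:ℕ) : AdjoinRoot (cyclotomic p ℚ_[p])) from map_natCast _ _]
    exact hξ
  set φ : AdjoinRoot fQ →ₐ[ℚ_[p]] AdjoinRoot (cyclotomic p ℚ_[p]) :=
    AdjoinRoot.liftAlgHom fQ (Algebra.ofId _ _) ξ haev with hφdef
  -- dimensions
  have hfQ0 : fQ ≠ 0 := hirrfQ.ne_zero
  have hPhiQ0 : cyclotomic p ℚ_[p] ≠ 0 := hirrPhiQ.ne_zero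
  haveI : Module.Finite ℚ_[p] (AdjoinRoot fQ) := (AdjoinRoot.powerBasis hfQ0).finite
  haveI : Module.Finite ℚ_[p] (AdjoinRoot (cyclotomic p ℚ_[p])) :=
    (AdjoinRoot.powerBasis hPhiQ0).finite
  have hrank : Module.finrank ℚ_[p] (AdjoinRoot fQ)
      = Module.finrank ℚ_[p] (AdjoinRoot (cyclotomic p ℚ_[p])) := by
    rw [(AdjoinRoot.powerBasis hfQ0).finrank, (AdjoinRoot.powerBasis hPhiQ0).finrank,
      AdjoinRoot.powerBasis_dim, AdjoinRoot.powerBasis_dim, hfQ, natDegree_X_pow_add_C,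
      natDegree_cyclotomic, Nat.totient_prime (Fact.out : p.Prime)]
  have hinj : Function.Injective φ := φ.toRingHom.injective
  have hsurj : Function.Surjective φ := by
    have h := (LinearMap.linearEquivOfInjective φ.toLinearMap hinj hrank).surjective
    intro y
    obtain ⟨x, hx⟩ := h y
    exact ⟨x, hx⟩
  exact ⟨AlgEquiv.ofBijective φ ⟨hinj, hsurj⟩⟩
end

section
/- The ring Z_p[u, w]/(pw + u^{p-1}) embeds into Z_p[ξ][v] (where ξ^{p-1} = -p) via u ↦ ξv, w ↦ v^{p-1}, and this map is an injective ring homomorphism whose image is the subring of invariants of the (Z/p)^×-action sending ξ ↦ χ(g)ξ, v ↦ χ(g)^{-1}v for a faithful character χ. -/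
set_option maxHeartbeats 1000000
set_option synthInstance.maxHeartbeats 400000

open Polynomial

/-- `ℤ_p[ξ] = ℤ_p[X]/(X^(p-1)+p)`. -/
abbrev ZpXi (p : ℕ) [Fact p.Prime] : Type :=
  Polynomial ℤ_[p] ⧸ Ideal.span {(X : Polynomial ℤ_[p]) ^ (p - 1) + C (p : ℤ_[p])}

/-- The class `ξ` of `X` in `ℤ_p[ξ]`. -/
noncomputable def xi (p : ℕ) [Fact p.Prime] : ZpXi p :=
  Ideal.Quotient.mk _ (X : Polynomial ℤ_[p])

/-- `B = ℤ_p[ξ][v]`. -/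
abbrev Bring (p : ℕ) [Fact p.Prime] : Type := Polynomial (ZpXi p)

/-- `A = ℤ_p[u,w]/(pw + u^(p-1))`, with `u = X 0`, `w = X 1`. -/
abbrev Aring (p : ℕ) [Fact p.Prime] : Type :=
  MvPolynomial (Fin 2) ℤ_[p] ⧸
    Ideal.span {(p : MvPolynomial (Fin 2) ℤ_[p]) * MvPolynomial.X 1 +
      (MvPolynomial.X 0) ^ (p - 1)}

/- ## Auxiliary definitions and lemmas -/

section Aux

variable (p : ℕ) [Fact p.Prime]

noncomputable def qpoly : Polynomial ℤ_[p] := X ^ (p - 1) + C (p : ℤ_[p])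

lemma q_monic : (qpoly p).Monic := by
  have h : p - 1 ≠ 0 := by have := (Fact.out : p.Prime).two_le; omega
  exact monic_X_pow_add_C _ h

lemma q_natDegree : (qpoly p).natDegree = p - 1 := natDegree_X_pow_add_C

lemma dim_eq : (AdjoinRoot.powerBasis' (q_monic p)).dim = p - 1 := by
  rw [AdjoinRoot.powerBasis'_dim, q_natDegree]

/-- the power basis `1, ξ, …, ξ^(p-2)` of `ℤ_p[ξ]` over `ℤ_p`. -/
noncomputable def bXi : Module.Basis (Fin (p - 1)) ℤ_[p] (ZpXi p) :=
  ((AdjoinRoot.powerBasis' (q_monic p)).basis.reindex (finCongr (dim_eq p)))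

lemma bXi_apply (i : Fin (p - 1)) : bXi p i = xi p ^ (i : ℕ) := by
  have : (AdjoinRoot.powerBasis' (q_monic p)).basis.reindex (finCongr (dim_eq p)) i
      = AdjoinRoot.root (qpoly p) ^ (i : ℕ) := by
    rw [Module.Basis.reindex_apply, PowerBasis.basis_eq_pow]
    simp
  exact this

/-- the basis `ξ^i v^n` of `B` over `ℤ_p`. -/
noncomputable def bB : Module.Basis (Fin (p - 1) × ℕ) ℤ_[p] (Bring p) :=
  (bXi p).smulTower (Polynomial.basisMonomials (ZpXi p))

lemma bB_apply (i : Fin (p - 1)) (n : ℕ) :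
    bB p (i, n) = C (xi p ^ (i : ℕ)) * X ^ n := by
  rw [bB, Module.Basis.smulTower_apply, bXi_apply, Polynomial.coe_basisMonomials]
  rw [smul_monomial, smul_eq_mul, mul_one, ← C_mul_X_pow_eq_monomial]

lemma xi_pow : xi p ^ (p - 1) = - (p : ZpXi p) := by
  have h : (Ideal.Quotient.mk (Ideal.span {(X : Polynomial ℤ_[p]) ^ (p - 1) + C (p : ℤ_[p])}))
      ((X : Polynomial ℤ_[p]) ^ (p - 1) + C (p : ℤ_[p])) = 0 := by
    rw [Ideal.Quotient.eq_zero_iff_mem]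
    exact Ideal.subset_span rfl
  rw [map_add, map_pow] at h
  have hC : (Ideal.Quotient.mk (Ideal.span {(X : Polynomial ℤ_[p]) ^ (p - 1) + C (p : ℤ_[p])}))
      (C (p : ℤ_[p])) = ((p : ℕ) : ZpXi p) := by
    have h2 : (C (p : ℤ_[p])) = ((p : ℕ) : Polynomial ℤ_[p]) := Polynomial.C_eq_natCast p
    rw [congrArg (Ideal.Quotient.mk _) h2]
    exact map_natCast _ p
  rw [hC] at h
  unfold xi
  linear_combination h

/-- The algebra map `ℤ_p[u,w] → B`, `u ↦ ξ v`, `w ↦ v^(p-1)`. -/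
noncomputable def Fhom : MvPolynomial (Fin 2) ℤ_[p] →ₐ[ℤ_[p]] Bring p :=
  MvPolynomial.aeval ![C (xi p) * X, X ^ (p - 1)]

lemma Fhom_rel : Fhom p ((p : MvPolynomial (Fin 2) ℤ_[p]) * MvPolynomial.X 1 +
    (MvPolynomial.X 0) ^ (p - 1)) = 0 := by
  simp only [Fhom, map_add, map_mul, map_pow, map_natCast, MvPolynomial.aeval_X]
  simp only [Matrix.cons_val_zero, Matrix.cons_val_one, Matrix.head_cons]
  rw [mul_pow (M := Bring p), ← C_pow, xi_pow, map_neg]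
  simp only [Polynomial.C_eq_natCast]
  ring

/-- The induced algebra map `A → B`. -/
noncomputable def fhom : Aring p →ₐ[ℤ_[p]] Bring p :=
  Ideal.Quotient.liftₐ _ (Fhom p) (by
    intro a ha
    rw [Ideal.mem_span_singleton'] at ha
    obtain ⟨c, rfl⟩ := ha
    rw [map_mul, Fhom_rel, mul_zero])

lemma fhom_mk (a : MvPolynomial (Fin 2) ℤ_[p]) :
    fhom p (Ideal.Quotient.mk _ a) = Fhom p a := by
  exact Ideal.Quotient.lift_mk _ _ _

lemma fhom_monomial (i j : ℕ) :
    fhom p (Ideal.Quotient.mk _ (MvPolynomial.X 0 ^ i * MvPolynomial.X 1 ^ j)) =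
      C (xi p ^ i) * X ^ (i + (p - 1) * j) := by
  rw [fhom_mk, map_mul, map_pow, map_pow]
  simp only [Fhom, MvPolynomial.aeval_X, Matrix.cons_val_zero, Matrix.cons_val_one,
    Matrix.head_cons]
  rw [mul_pow (M := Bring p), ← C_pow, ← pow_mul, pow_add, mul_comm ((p-1)) j]
  ring

/-- The spanning family `u^i w^j`, `i < p-1`, of `A`. -/
noncomputable def vfam : Fin (p - 1) × ℕ → Aring p := fun k =>
  Ideal.Quotient.mk _ (MvPolynomial.X 0 ^ (k.1 : ℕ) * MvPolynomial.X 1 ^ k.2)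

lemma rel_A : (Ideal.Quotient.mk (Ideal.span {(p : MvPolynomial (Fin 2) ℤ_[p]) *
      MvPolynomial.X 1 + (MvPolynomial.X 0) ^ (p - 1)}))
      ((MvPolynomial.X 0 : MvPolynomial (Fin 2) ℤ_[p]) ^ (p - 1)) =
    (-(p : ℤ_[p])) • Ideal.Quotient.mk _ (MvPolynomial.X 1) := by
  have h : (Ideal.Quotient.mk (Ideal.span {(p : MvPolynomial (Fin 2) ℤ_[p]) *
      MvPolynomial.X 1 + (MvPolynomial.X 0) ^ (p - 1)}))
      ((p : MvPolynomial (Fin 2) ℤ_[p]) * MvPolynomial.X 1 +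
        (MvPolynomial.X 0) ^ (p - 1)) = 0 := by
    rw [Ideal.Quotient.eq_zero_iff_mem]
    exact Ideal.subset_span rfl
  rw [map_add, map_mul, map_natCast] at h
  have hs : (-(p : ℤ_[p])) • (Ideal.Quotient.mk (Ideal.span {(p : MvPolynomial (Fin 2) ℤ_[p]) *
      MvPolynomial.X 1 + (MvPolynomial.X 0) ^ (p - 1)})) (MvPolynomial.X 1) =
      (algebraMap ℤ_[p] (Aring p) (-(p : ℤ_[p]))) * Ideal.Quotient.mk _ (MvPolynomial.X 1) :=
    Algebra.smul_def (A := Aring p) _ _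
  rw [hs, map_neg, map_natCast]
  linear_combination h

lemma mono_mem (i j : ℕ) :
    Ideal.Quotient.mk (Ideal.span {(p : MvPolynomial (Fin 2) ℤ_[p]) * MvPolynomial.X 1 +
      (MvPolynomial.X 0) ^ (p - 1)})
      (MvPolynomial.X 0 ^ i * MvPolynomial.X 1 ^ j) ∈
    Submodule.span ℤ_[p] (Set.range (vfam p)) := by
  induction i using Nat.strong_induction_on generalizing j with
  | _ i IH =>
    by_cases hi : i < p - 1
    · exact Submodule.subset_span ⟨(⟨i, hi⟩, j), rfl⟩
    · push_neg at hi
      have hp1 : 1 ≤ p - 1 := by have := (Fact.out : p.Prime).two_le; omega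
      have hi' : i = (i - (p - 1)) + (p - 1) := by omega
      have hsplit : (MvPolynomial.X 0 ^ i * MvPolynomial.X 1 ^ j :
          MvPolynomial (Fin 2) ℤ_[p]) =
          (MvPolynomial.X 0 ^ (i - (p - 1)) * MvPolynomial.X 1 ^ j) *
            (MvPolynomial.X 0) ^ (p - 1) := by
        conv_lhs => rw [hi']
        rw [pow_add]; ring
      rw [hsplit, map_mul, rel_A, mul_smul_comm, ← map_mul]
      have hx : (MvPolynomial.X 0 ^ (i - (p - 1)) * MvPolynomial.X 1 ^ j *
          MvPolynomial.X 1 : MvPolynomial (Fin 2) ℤ_[p]) =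
          MvPolynomial.X 0 ^ (i - (p - 1)) * MvPolynomial.X 1 ^ (j + 1) := by
        rw [pow_succ]; ring
      rw [hx]
      exact Submodule.smul_mem _ _ (IH (i - (p - 1)) (by omega) (j + 1))

lemma span_eq_top : Submodule.span ℤ_[p] (Set.range (vfam p)) = ⊤ := by
  rw [eq_top_iff]
  rintro a -
  obtain ⟨x, rfl⟩ := Ideal.Quotient.mk_surjective a
  rw [MvPolynomial.as_sum x, map_sum]
  refine Submodule.sum_mem _ fun m _ => ?_
  have hmono : (MvPolynomial.monomial m (MvPolynomial.coeff m x) :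
      MvPolynomial (Fin 2) ℤ_[p]) =
      MvPolynomial.C (MvPolynomial.coeff m x) *
        (MvPolynomial.X 0 ^ (m 0) * MvPolynomial.X 1 ^ (m 1)) := by
    rw [MvPolynomial.monomial_eq, Finsupp.prod_fintype _ _ (fun i => pow_zero _),
      Fin.prod_univ_two]
  rw [hmono, map_mul]
  have halg : (Ideal.Quotient.mk (Ideal.span {(p : MvPolynomial (Fin 2) ℤ_[p]) *
      MvPolynomial.X 1 + (MvPolynomial.X 0) ^ (p - 1)}))
      (MvPolynomial.C (MvPolynomial.coeff m x)) =
      algebraMap ℤ_[p] (Aring p) (MvPolynomial.coeff m x) := rfl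
  rw [halg, ← Algebra.smul_def]
  exact Submodule.smul_mem _ _ (mono_mem p _ _)

lemma inj_of_span_li {R M N ι : Type*} [CommRing R] [AddCommGroup M] [AddCommGroup N]
    [Module R M] [Module R N] (f : M →ₗ[R] N) (v : ι → M)
    (hs : Submodule.span R (Set.range v) = ⊤)
    (hli : LinearIndependent R (f ∘ v)) : Function.Injective f := by
  rw [← LinearMap.ker_eq_bot, Submodule.eq_bot_iff]
  intro a ha
  have hf : f a = 0 := LinearMap.mem_ker.mp ha
  have hmem : a ∈ Submodule.span R (Set.range v) := by rw [hs]; trivial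
  rw [Finsupp.mem_span_range_iff_exists_finsupp] at hmem
  obtain ⟨c, hc⟩ := hmem
  have h0 : Finsupp.linearCombination R (f ∘ v) c = 0 := by
    rw [Finsupp.linearCombination_apply]
    have := congrArg f hc
    rw [map_finsuppSum] at this
    simpa [hf, Function.comp] using this
  have hc0 := linearIndependent_iff.mp hli c h0
  rw [← hc, hc0]
  simp

lemma fhom_vfam (k : Fin (p - 1) × ℕ) :
    fhom p (vfam p k) = bB p (k.1, (k.1 : ℕ) + (p - 1) * k.2) := by
  rw [vfam, fhom_monomial, bB_apply]

lemma fhom_injective : Function.Injective (fhom p) := by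
  have hidx : Function.Injective
      (fun k : Fin (p - 1) × ℕ => ((k.1 : Fin (p - 1)), (k.1 : ℕ) + (p - 1) * k.2)) := by
    have hp1 : 1 ≤ p - 1 := by have := (Fact.out : p.Prime).two_le; omega
    rintro ⟨i, j⟩ ⟨i', j'⟩ h
    simp only [Prod.mk.injEq] at h
    obtain ⟨h1, h2⟩ := h
    subst h1
    have h3 : (p - 1) * j = (p - 1) * j' := by omega
    have : j = j' := Nat.eq_of_mul_eq_mul_left (by omega) h3
    rw [this]
  have hli : LinearIndependent ℤ_[p] ((fhom p).toLinearMap ∘ vfam p) := by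
    have : (fhom p).toLinearMap ∘ vfam p =
        (bB p) ∘ (fun k : Fin (p - 1) × ℕ =>
          ((k.1 : Fin (p - 1)), (k.1 : ℕ) + (p - 1) * k.2)) := by
      funext k
      exact fhom_vfam p k
    rw [this]
    exact (bB p).linearIndependent.comp _ hidx
  exact inj_of_span_li (fhom p).toLinearMap (vfam p) (span_eq_top p) hli

end Aux

/-- `ℤ_p[u,w]/(pw + u^(p-1))` embeds into `ℤ_p[ξ][v]` via `u ↦ ξv`,
`w ↦ v^(p-1)`: this is an injective `ℤ_p`-algebra homomorphism whose image is the
subring of invariants of the `(ℤ/p)ˣ`-action by `ℤ_p`-algebra automorphisms with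
`ξ ↦ χ(g)ξ`, `v ↦ χ(g)⁻¹v`, for the faithful (Teichmüller) character
`χ : (ℤ/p)ˣ → ℤ_pˣ`. -/
theorem stmt_6 (p : ℕ) [Fact p.Prime] (hp : Odd p)
    (χ : (ZMod p)ˣ →* ℤ_[p]ˣ)
    (hχ : ∀ g : (ZMod p)ˣ, PadicInt.toZMod ((χ g : ℤ_[p]ˣ) : ℤ_[p]) = (g : ZMod p))
    (σ : (ZMod p)ˣ →* (Bring p ≃ₐ[ℤ_[p]] Bring p))
    (hσξ : ∀ g : (ZMod p)ˣ, σ g (C (xi p)) = ((χ g : ℤ_[p]ˣ) : ℤ_[p]) • C (xi p))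
    (hσv : ∀ g : (ZMod p)ˣ, σ g (X : Bring p) = (((χ g)⁻¹ : ℤ_[p]ˣ) : ℤ_[p]) • X) :
    ∃ f : Aring p →ₐ[ℤ_[p]] Bring p,
      f (Ideal.Quotient.mk _ (MvPolynomial.X 0)) = C (xi p) * X ∧
      f (Ideal.Quotient.mk _ (MvPolynomial.X 1)) = (X : Bring p) ^ (p - 1) ∧
      Function.Injective f ∧
      ∀ b : Bring p, b ∈ f.range ↔ ∀ g : (ZMod p)ˣ, σ g b = b := by
  have hfu : fhom p (Ideal.Quotient.mk _ (MvPolynomial.X 0)) = C (xi p) * X := by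
    have h1 : Ideal.Quotient.mk (Ideal.span {(p : MvPolynomial (Fin 2) ℤ_[p]) *
        MvPolynomial.X 1 + (MvPolynomial.X 0) ^ (p - 1)}) (MvPolynomial.X 0) =
        Ideal.Quotient.mk _ (MvPolynomial.X 0 ^ 1 * MvPolynomial.X 1 ^ 0) :=
      congrArg _ (by ring)
    rw [h1, fhom_monomial]
    simp
  have hfw : fhom p (Ideal.Quotient.mk _ (MvPolynomial.X 1)) = (X : Bring p) ^ (p - 1) := by
    have h1 : Ideal.Quotient.mk (Ideal.span {(p : MvPolynomial (Fin 2) ℤ_[p]) *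
        MvPolynomial.X 1 + (MvPolynomial.X 0) ^ (p - 1)}) (MvPolynomial.X 1) =
        Ideal.Quotient.mk _ (MvPolynomial.X 0 ^ 0 * MvPolynomial.X 1 ^ 1) :=
      congrArg _ (by ring)
    rw [h1, fhom_monomial]
    simp
  refine ⟨fhom p, hfu, hfw, fhom_injective p, ?_⟩
  -- range = invariants
  have hcard : Fintype.card (ZMod p)ˣ = p - 1 := ZMod.card_units p
  -- χ(g)^(p-1) = 1
  have hchi_pow : ∀ g : (ZMod p)ˣ, (χ g) ^ (p - 1) = 1 := by
    intro g
    rw [← map_pow, ← hcard, pow_card_eq_one, map_one]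
  -- diagonal action on the basis
  have hdiag : ∀ (g : (ZMod p)ˣ) (k : Fin (p - 1) × ℕ),
      σ g (bB p k) = ((χ g ^ ((k.1 : ℤ) - (k.2 : ℤ)) : ℤ_[p]ˣ) : ℤ_[p]) • bB p k := by
    rintro g ⟨i, n⟩
    have hC : σ g (C (xi p ^ (i : ℕ))) =
        (((χ g : ℤ_[p]ˣ) : ℤ_[p]) ^ (i : ℕ)) • C (xi p ^ (i : ℕ)) := by
      rw [C_pow, map_pow, hσξ, _root_.smul_pow]
    have hX : σ g ((X : Bring p) ^ n) =
        ((((χ g)⁻¹ : ℤ_[p]ˣ) : ℤ_[p]) ^ n) • (X : Bring p) ^ n := by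
      rw [map_pow, hσv, _root_.smul_pow]
    have hcoe : ((χ g ^ ((i : ℤ) - (n : ℤ)) : ℤ_[p]ˣ) : ℤ_[p]) =
        (((χ g : ℤ_[p]ˣ) : ℤ_[p]) ^ (i : ℕ)) * ((((χ g)⁻¹ : ℤ_[p]ˣ) : ℤ_[p]) ^ n) := by
      have hu : χ g ^ ((i : ℤ) - (n : ℤ)) = χ g ^ (i : ℕ) * ((χ g)⁻¹) ^ n := by
        rw [zpow_sub, zpow_natCast, zpow_natCast, inv_pow]
      rw [hu, Units.val_mul, Units.val_pow_eq_pow_val, Units.val_pow_eq_pow_val]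
    show σ g (bB p (i, n)) = _ • bB p (i, n)
    rw [bB_apply, map_mul, hC, hX, smul_mul_smul_comm, hcoe]
  intro b
  constructor
  · -- image is invariant
    rintro ⟨a, rfl⟩ g
    have hcomp : ((σ g).toAlgHom.comp (fhom p)) = fhom p := by
      apply Ideal.Quotient.algHom_ext
      apply MvPolynomial.algHom_ext
      intro i
      fin_cases i
      · show σ g (fhom p (Ideal.Quotient.mk _ (MvPolynomial.X 0))) =
          fhom p (Ideal.Quotient.mk _ (MvPolynomial.X 0))
        rw [hfu, map_mul, hσξ, hσv, smul_mul_smul_comm, ← Units.val_mul, mul_inv_cancel,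
          Units.val_one, one_smul]
      · show σ g (fhom p (Ideal.Quotient.mk _ (MvPolynomial.X 1))) =
          fhom p (Ideal.Quotient.mk _ (MvPolynomial.X 1))
        rw [hfw, map_pow, hσv, _root_.smul_pow, ← Units.val_pow_eq_pow_val, inv_pow, hchi_pow,
          inv_one, Units.val_one, one_smul]
    exact AlgHom.congr_fun hcomp a
  · -- invariants are in the image
    intro hb
    set c := (bB p).repr b with hcdef
    have hrep : ∑ k ∈ c.support, c k • bB p k = b := by
      conv_rhs => rw [← (bB p).linearCombination_repr b]
      rw [Finsupp.linearCombination_apply, Finsupp.sum]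
    have hcoef : ∀ k ∈ c.support, ∀ g : (ZMod p)ˣ,
        ((χ g ^ ((k.1 : ℤ) - (k.2 : ℤ)) : ℤ_[p]ˣ) : ℤ_[p]) * c k = c k := by
      intro k hk g
      have h1 : ∑ k' ∈ c.support,
          (((χ g ^ ((k'.1 : ℤ) - (k'.2 : ℤ)) : ℤ_[p]ˣ) : ℤ_[p]) * c k') • bB p k' =
          ∑ k' ∈ c.support, c k' • bB p k' := by
        have hsig : σ g (∑ k' ∈ c.support, c k' • bB p k') =
            ∑ k' ∈ c.support,
              (((χ g ^ ((k'.1 : ℤ) - (k'.2 : ℤ)) : ℤ_[p]ˣ) : ℤ_[p]) * c k') • bB p k' := by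
          rw [map_sum]
          refine Finset.sum_congr rfl fun k' _ => ?_
          rw [map_smul, hdiag g k', smul_smul, mul_comm (c k')]
        calc ∑ k' ∈ c.support,
              (((χ g ^ ((k'.1 : ℤ) - (k'.2 : ℤ)) : ℤ_[p]ˣ) : ℤ_[p]) * c k') • bB p k'
            = σ g (∑ k' ∈ c.support, c k' • bB p k') := hsig.symm
          _ = σ g b := by rw [hrep]
          _ = b := hb g
          _ = ∑ k' ∈ c.support, c k' • bB p k' := hrep.symm
      have h2 : ∑ k' ∈ c.support,
          ((((χ g ^ ((k'.1 : ℤ) - (k'.2 : ℤ)) : ℤ_[p]ˣ) : ℤ_[p]) * c k') - c k') • bB p k' =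
          0 := by
        simp only [sub_smul]
        rw [Finset.sum_sub_distrib, h1, sub_self]
      have h3 := linearIndependent_iff'.mp (bB p).linearIndependent c.support _ h2 k hk
      exact sub_eq_zero.mp h3
    have hdvd : ∀ k ∈ c.support, ((p - 1 : ℕ) : ℤ) ∣ ((k.1 : ℤ) - (k.2 : ℤ)) := by
      intro k hk
      have hck : c k ≠ 0 := Finsupp.mem_support_iff.mp hk
      have hone : ∀ g : (ZMod p)ˣ, χ g ^ ((k.1 : ℤ) - (k.2 : ℤ)) = 1 := by
        intro g
        have h4 := hcoef k hk g
        have h5 : (((χ g ^ ((k.1 : ℤ) - (k.2 : ℤ)) : ℤ_[p]ˣ) : ℤ_[p]) - 1) * c k = 0 := by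
          rw [sub_mul, one_mul, h4, sub_self]
        rcases mul_eq_zero.mp h5 with h6 | h6
        · exact Units.ext (sub_eq_zero.mp h6)
        · exact absurd h6 hck
      obtain ⟨g0, hg0⟩ := IsCyclic.exists_generator (α := (ZMod p)ˣ)
      have hinj : Function.Injective χ := by
        intro a b hab
        have ha := hχ a
        rw [hab, hχ b] at ha
        exact Units.ext ha.symm
      have hord : orderOf (χ g0) = p - 1 := by
        rw [orderOf_injective χ hinj g0, orderOf_eq_card_of_forall_mem_zpowers hg0,
          Nat.card_eq_fintype_card, hcard]
      have := orderOf_dvd_iff_zpow_eq_one.mpr (hone g0)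
      rwa [hord] at this
    rw [← hrep]
    refine Subalgebra.sum_mem _ fun k hk => Subalgebra.smul_mem _ ?_ _
    obtain ⟨i, n⟩ := k
    have hd := hdvd (i, n) hk
    have hp1 : 1 ≤ p - 1 := by have := (Fact.out : p.Prime).two_le; omega
    have hilt : (i : ℕ) < p - 1 := i.isLt
    obtain ⟨t, ht⟩ := hd
    have ht' : (i : ℤ) - (n : ℤ) = ((p - 1 : ℕ) : ℤ) * t := ht
    have hi2 : (i : ℤ) < ((p - 1 : ℕ) : ℤ) := by exact_mod_cast hilt
    have hn0 : (0 : ℤ) ≤ (n : ℤ) := Int.natCast_nonneg n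
    have ht0 : 0 ≤ -t := by
      by_contra hlt
      push_neg at hlt
      have h1t : (1 : ℤ) ≤ t := by omega
      have hmul : ((p - 1 : ℕ) : ℤ) ≤ ((p - 1 : ℕ) : ℤ) * t :=
        le_mul_of_one_le_right (by positivity) h1t
      linarith
    have hj : (n : ℕ) = (i : ℕ) + (p - 1) * (-t).toNat := by
      have h9 : ((i : ℕ) + (p - 1) * (-t).toNat : ℕ) = (n : ℕ) := by
        zify
        rw [Int.toNat_of_nonneg ht0]
        push_cast
        push_cast at ht'
        linarith
      omega
    refine ⟨Ideal.Quotient.mk _ (MvPolynomial.X 0 ^ (i : ℕ) *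
      MvPolynomial.X 1 ^ ((-t).toNat)), ?_⟩
    show fhom p (Ideal.Quotient.mk _ (MvPolynomial.X 0 ^ (i : ℕ) *
      MvPolynomial.X 1 ^ ((-t).toNat))) = bB p (i, n)
    rw [fhom_monomial, bB_apply, ← hj]
end
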